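/- Every finite semiabelian group is a surjective homomorphic image of a descending iterated standard wreath product of finite cyclic groups, i.e., for every finite semiabelian G there exist finite cyclic groups C₁, ..., C_r and an epimorphism C₁ ≀ (C₂ ≀ (··· ≀ C_r)···) → G. -/

import Mathlib

/-- The automorphism action of `G` on `G → H` by right translation:
`(wrAut H G g) f x = f (x * g)`, so that the semidirect product below has
multiplication `(f₁, g₁)(f₂, g₂) = (f₁ · f₂^{g₁⁻¹}, g₁g₂)` with
`f₂^{g₁⁻¹}(x) = f₂ (x * g₁)`. -/
def wrAut (H G : Type*) [Group H] [Group G] : G →* MulAut (G → H) where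
  toFun g :=
    { toFun := fun f x => f (x * g)
      invFun := fun f x => f (x * g⁻¹)
      left_inv := fun f => funext fun x => by simp [mul_assoc]
      right_inv := fun f => funext fun x => by simp [mul_assoc]
      map_mul' := fun f₁ f₂ => rfl }
  map_one' := MulEquiv.ext fun f => funext fun x => by simp
  map_mul' := fun g₁ g₂ => MulEquiv.ext fun f => funext fun x => by simp [mul_assoc]

/-- The standard (regular) wreath product `H ≀ G`. -/
abbrev Wr (H G : Type*) [Group H] [Group G] := SemidirectProduct (G → H) G (wrAut H G)

/-- The standard wreath product of bundled groups. -/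
def WrGrp (H G : GrpCat.{u}) : GrpCat.{u} := GrpCat.of (Wr H G)

/-- Descending iterated standard wreath product `C₁ ≀ (C₂ ≀ (⋯ ≀ C_r)⋯)`,
given by a head group and the list of remaining groups. -/
def descW : GrpCat.{u} → List GrpCat.{u} → GrpCat.{u}
  | G, [] => G
  | G, H :: t => WrGrp G (descW H t)

/-- Ascending iterated standard wreath product `(⋯(C₁ ≀ C₂) ≀ ⋯) ≀ C_r`,
given by a head group and the list of remaining groups. -/
def ascW : GrpCat.{u} → List GrpCat.{u} → GrpCat.{u}
  | G, [] => G
  | G, H :: t => ascW (WrGrp G H) t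

/-- The class of finite semiabelian groups: the smallest class of (bundled) finite
groups containing all finite abelian groups, closed under quotients (hence under
isomorphism), and closed under forming semidirect products `A ⋊ G` with `A` finite
abelian and `G` in the class. -/
inductive IsSemiabelian : GrpCat.{u} → Prop
  | of_abelian (G : GrpCat.{u}) (hfin : Finite G) (h : ∀ x y : G, x * y = y * x) :
      IsSemiabelian G
  | of_quotient (G H : GrpCat.{u}) (f : G →* H) (hf : Function.Surjective f)
      (hG : IsSemiabelian G) : IsSemiabelian H
  | of_semidirect (G : GrpCat.{u}) (A : Type u) [CommGroup A] (hA : Finite A)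
      (φ : G →* MulAut A) (hG : IsSemiabelian G) :
      IsSemiabelian (GrpCat.of (A ⋊[φ] G))

namespace Stmt13Aux

open Function SemidirectProduct

instance finiteSdp {N G : Type*} [Group N] [Group G] {φ : G →* MulAut N}
    [Finite N] [Finite G] : Finite (N ⋊[φ] G) :=
  Finite.of_injective (fun x => (x.left, x.right)) fun _ _ h =>
    SemidirectProduct.ext (congrArg Prod.fst h) (congrArg Prod.snd h)

section Tfun

variable {V W Z : Type*} [Group V] [Group W] [CommGroup Z] [Fintype V] [DecidableEq W]

/-- The "product over fibers" map associated to `ρ : V →* W`. -/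
def Tfun (ρ : V →* W) (f : V → Z) (w : W) : Z := ∏ v : {v : V // ρ v = w}, f v.1

lemma Tfun_mul (ρ : V →* W) (f g : V → Z) : Tfun ρ (f * g) = Tfun ρ f * Tfun ρ g :=
  funext fun _ => Finset.prod_mul_distrib

lemma Tfun_one (ρ : V →* W) : Tfun ρ (1 : V → Z) = 1 := by
  funext w; simp [Tfun]

lemma Tfun_transl (ρ : V →* W) (f : V → Z) (v₀ : V) :
    Tfun ρ (fun v => f (v * v₀)) = fun w => Tfun ρ f (w * ρ v₀) := by
  funext w
  exact Fintype.prod_equiv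
    ((Equiv.mulRight v₀).subtypeEquiv fun v => by simp [map_mul])
    _ _ fun v => rfl

lemma Tfun_surj (ρ : V →* W) (hρ : Surjective ρ) (g : W → Z) :
    ∃ f : V → Z, Tfun ρ f = g := by
  classical
  refine ⟨fun v => if v = surjInv hρ (ρ v) then g (ρ v) else 1, funext fun w => ?_⟩
  have h1 : ∀ x : {v : V // ρ v = w}, x ≠ ⟨surjInv hρ w, surjInv_eq hρ w⟩ →
      (if (x : V) = surjInv hρ (ρ (x : V)) then g (ρ (x : V)) else 1) = 1 := by
    rintro ⟨v, hv⟩ hne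
    rw [if_neg]
    intro h
    exact hne (Subtype.ext (by rw [h, hv]))
  calc Tfun ρ (fun v => if v = surjInv hρ (ρ v) then g (ρ v) else 1) w
      = _ := Fintype.prod_eq_single _ h1
    _ = g w := by simp [surjInv_eq hρ w]

end Tfun

section Homs

variable {V W Z : Type*} [Group V] [Group W] [CommGroup Z] [Fintype V] [DecidableEq W]

/-- Base-change homomorphism between wreath products, `Z ≀ V →* Z ≀ W`. -/
def wrBase (ρ : V →* W) : Wr Z V →* Wr Z W where
  toFun x := ⟨Tfun ρ x.left, ρ x.right⟩
  map_one' := SemidirectProduct.ext (Tfun_one ρ) (map_one ρ)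
  map_mul' x y := SemidirectProduct.ext
    (by
      show Tfun ρ (x.left * fun v => y.left (v * x.right)) =
        Tfun ρ x.left * fun w => Tfun ρ y.left (w * ρ x.right)
      rw [Tfun_mul, Tfun_transl])
    (map_mul ρ _ _)

lemma wrBase_surj (ρ : V →* W) (hρ : Surjective ρ) :
    Surjective (wrBase (Z := Z) ρ) := by
  rintro ⟨g, w⟩
  obtain ⟨f, hf⟩ := Tfun_surj ρ hρ g
  obtain ⟨v, rfl⟩ := hρ w
  exact ⟨⟨f, v⟩, SemidirectProduct.ext hf rfl⟩

end Homs

section Pair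

variable (Z P W : Type*) [CommGroup Z] [Group P] [Group W] [Fintype (Wr P W)] [DecidableEq W]

/-- The pairing homomorphism `Z ≀ (P ≀ W) →* (Z × P) ≀ W`. -/
def wrPair : Wr Z (Wr P W) →* Wr (Z × P) W where
  toFun x := ⟨fun w => (Tfun rightHom x.left w, x.right.left w), x.right.right⟩
  map_one' := SemidirectProduct.ext
    (funext fun w => Prod.ext (congrFun (Tfun_one rightHom) w) rfl) rfl
  map_mul' x y := SemidirectProduct.ext
    (funext fun w => Prod.ext
      (by
        show Tfun rightHom (x.left * fun v => y.left (v * x.right)) w =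
          Tfun rightHom x.left w * Tfun rightHom y.left (w * x.right.right)
        rw [Tfun_mul, Tfun_transl]
        rfl)
      rfl)
    rfl

lemma wrPair_surj : Surjective (wrPair Z P W) := by
  rintro ⟨h, w⟩
  obtain ⟨f, hf⟩ := Tfun_surj (rightHom (φ := wrAut P W)) rightHom_surjective
    (fun w' => (h w').1)
  exact ⟨⟨f, ⟨fun w' => (h w').2, w⟩⟩,
    SemidirectProduct.ext (funext fun w' => Prod.ext (congrFun hf w') rfl) rfl⟩

end Pair

section Post

variable {Z Z' : Type*} [Group Z] [Group Z'] (W : Type*) [Group W]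

/-- The post-composition homomorphism `Z ≀ W →* Z' ≀ W`. -/
def wrPost (q : Z →* Z') : Wr Z W →* Wr Z' W where
  toFun x := ⟨fun w => q (x.left w), x.right⟩
  map_one' := SemidirectProduct.ext (funext fun _ => map_one q) rfl
  map_mul' x y := SemidirectProduct.ext (funext fun w => map_mul q _ _) rfl

lemma wrPost_surj (q : Z →* Z') (hq : Surjective q) : Surjective (wrPost W q) := by
  rintro ⟨h, w⟩
  exact ⟨⟨fun w' => surjInv hq (h w'), w⟩,
    SemidirectProduct.ext (funext fun w' => surjInv_eq hq _) rfl⟩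

end Post

section ToSdp

variable {A G W : Type*} [CommGroup A] [Group G] [Group W] [Fintype W]

/-- The twisted evaluation `A ≀ W →* A ⋊[φ] G` over `π : W →* G`. -/
def wrToSdp (φ : G →* MulAut A) (π : W →* G) : Wr A W →* A ⋊[φ] G where
  toFun x := ⟨∏ v : W, (φ (π v))⁻¹ (x.left v), π x.right⟩
  map_one' := SemidirectProduct.ext (by simp) (by simp)
  map_mul' x y := SemidirectProduct.ext
    (by
      show (∏ v : W, (φ (π v))⁻¹ (x.left v * y.left (v * x.right))) =
        (∏ v : W, (φ (π v))⁻¹ (x.left v)) * φ (π x.right) (∏ v : W, (φ (π v))⁻¹ (y.left v))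
      calc ∏ v : W, (φ (π v))⁻¹ (x.left v * y.left (v * x.right))
          = ∏ v : W, ((φ (π v))⁻¹ (x.left v) * (φ (π v))⁻¹ (y.left (v * x.right))) := by
            simp [map_mul]
        _ = (∏ v : W, (φ (π v))⁻¹ (x.left v)) *
              ∏ v : W, (φ (π v))⁻¹ (y.left (v * x.right)) := Finset.prod_mul_distrib
        _ = (∏ v : W, (φ (π v))⁻¹ (x.left v)) *
              φ (π x.right) (∏ v : W, (φ (π v))⁻¹ (y.left v)) := by
            congr 1
            rw [map_prod]
            exact Fintype.prod_equiv (Equiv.mulRight x.right) _ _ fun v => by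
              rw [Equiv.coe_mulRight, map_mul π, map_mul φ, mul_inv_rev, MulAut.mul_apply,
                MulAut.apply_inv_self])
    (map_mul π _ _)

lemma wrToSdp_surj (φ : G →* MulAut A) (π : W →* G) (hπ : Surjective π) :
    Surjective (wrToSdp φ π) := by
  classical
  rintro ⟨a, g⟩
  obtain ⟨w, rfl⟩ := hπ g
  refine ⟨⟨(Pi.mulSingle 1 a : W → A), w⟩, SemidirectProduct.ext ?_ rfl⟩
  show (∏ v : W, (φ (π v))⁻¹ ((Pi.mulSingle 1 a : W → A) v)) = a
  calc (∏ v : W, (φ (π v))⁻¹ ((Pi.mulSingle 1 a : W → A) v))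
      = (φ (π (1 : W)))⁻¹ ((Pi.mulSingle 1 a : W → A) 1) :=
        Fintype.prod_eq_single 1 fun v hv => by rw [Pi.mulSingle_eq_of_ne hv]; simp
    _ = a := by simp

end ToSdp

/-- Iterated (binary) products of a list of bundled groups. -/
def PdG : List GrpCat.{u} → GrpCat.{u}
  | [] => GrpCat.of PUnit.{u + 1}
  | H :: t => GrpCat.of (H × PdG t)

lemma finite_PdG (l : List GrpCat.{u}) (hl : ∀ H ∈ l, Finite H) : Finite (PdG l) := by
  induction l with
  | nil => exact inferInstanceAs (Finite PUnit.{u + 1})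
  | cons H t ih =>
      haveI := hl H (by simp)
      haveI := ih fun K hK => hl K (by simp [hK])
      exact inferInstanceAs (Finite (H × PdG t))

/-- Iterated wreath products over a list of bundled groups. -/
def nestW : List GrpCat.{u} → GrpCat.{u} → GrpCat.{u}
  | [], W => W
  | Z :: t, W => WrGrp Z (nestW t W)

lemma finite_nestW (m : List GrpCat.{u}) (W : GrpCat.{u}) [Finite W]
    (hm : ∀ Z ∈ m, Finite Z) : Finite (nestW m W) := by
  induction m with
  | nil => exact ‹Finite W›
  | cons Z t ih =>
      haveI := hm Z (by simp)
      haveI := ih fun K hK => hm K (by simp [hK])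
      exact inferInstanceAs (Finite (Wr Z (nestW t W)))

lemma finite_descW (C : GrpCat.{u}) (l : List GrpCat.{u}) (h : ∀ H ∈ C :: l, Finite H) :
    Finite (descW C l) := by
  induction l generalizing C with
  | nil => exact h C (by simp)
  | cons H t ih =>
      haveI := h C (by simp)
      haveI := ih H fun K hK => h K (List.mem_cons_of_mem C hK)
      exact inferInstanceAs (Finite (Wr C (descW H t)))

lemma nest_descW (m : List GrpCat.{u}) (C : GrpCat.{u}) (l : List GrpCat.{u}) :
    ∃ (C' : GrpCat.{u}) (l' : List GrpCat.{u}),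
      C' :: l' = m ++ C :: l ∧ descW C' l' = nestW m (descW C l) := by
  induction m with
  | nil => exact ⟨C, l, rfl, rfl⟩
  | cons Z t ih =>
      obtain ⟨C₀, l₀, h1, h2⟩ := ih
      refine ⟨Z, C₀ :: l₀, by rw [h1]; rfl, ?_⟩
      show WrGrp Z (descW C₀ l₀) = WrGrp Z (nestW t (descW C l))
      rw [h2]

theorem abelian_cover (A : Type u) [Group A] [Finite A] (hc : ∀ x y : A, x * y = y * x) :
    ∃ l : List GrpCat.{u},
      (∀ H ∈ l, Finite H ∧ IsCyclic H ∧ ∀ x y : H, x * y = y * x) ∧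
      ∃ q : PdG l →* A, Surjective q := by
  letI : CommGroup A := { ‹Group A› with mul_comm := hc }
  letI : Fintype A := Fintype.ofFinite A
  have main : ∀ L : List A, ∃ l : List GrpCat.{u},
      (∀ H ∈ l, Finite H ∧ IsCyclic H ∧ ∀ x y : H, x * y = y * x) ∧
      ∃ q : PdG l →* A, ∀ g ∈ L, ∃ p, q p = g := by
    intro L
    induction L with
    | nil => exact ⟨[], by simp, 1, by simp⟩
    | cons g t ih =>
        obtain ⟨l₀, hl₀, q₀, hq₀⟩ := ih
        set n := orderOf g with hn
        haveI : NeZero n := ⟨(orderOf_pos g).ne'⟩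
        have hFn : (zmultiplesHom (Additive A) (Additive.ofMul g)) ((n : ℤ)) = 0 := by
          show ((n : ℤ)) • Additive.ofMul g = 0
          rw [← ofMul_zpow, zpow_natCast, pow_orderOf_eq_one]
          rfl
        let hgen : Multiplicative (ZMod n) →* A :=
          AddMonoidHom.toMultiplicativeLeft
            (ZMod.lift n ⟨zmultiplesHom (Additive A) (Additive.ofMul g), hFn⟩)
        let Cg : GrpCat.{u} := GrpCat.of (ULift.{u} (Multiplicative (ZMod n)))
        let hg : Cg →* A := hgen.comp (MulEquiv.ulift :
          ULift.{u} (Multiplicative (ZMod n)) ≃* Multiplicative (ZMod n)).toMonoidHom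
        have hgen1 : hg (ULift.up (Multiplicative.ofAdd (1 : ZMod n))) = g := by
          show hgen (Multiplicative.ofAdd ((1 : ZMod n))) = g
          show Additive.toMul ((ZMod.lift n
            ⟨zmultiplesHom (Additive A) (Additive.ofMul g), hFn⟩) ((1 : ZMod n))) = g
          rw [show (1 : ZMod n) = ((1 : ℤ) : ZMod n) by simp, ZMod.lift_coe]
          show Additive.toMul ((1 : ℤ) • Additive.ofMul g) = g
          rw [toMul_zsmul]
          simp
        haveI : IsCyclic (ULift.{u} (Multiplicative (ZMod n))) :=
          isCyclic_of_surjective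
            (MulEquiv.ulift.symm :
              Multiplicative (ZMod n) ≃* ULift.{u} (Multiplicative (ZMod n)))
            (MulEquiv.surjective _)
        refine ⟨Cg :: l₀, ?_, hg.coprod q₀, ?_⟩
        · intro H hH
          rcases List.mem_cons.mp hH with rfl | hH
          · exact ⟨inferInstanceAs (Finite (ULift.{u} (Multiplicative (ZMod n)))),
              inferInstanceAs (IsCyclic (ULift.{u} (Multiplicative (ZMod n)))),
              fun x y => @mul_comm (ULift.{u} (Multiplicative (ZMod n))) _ x y⟩
          · exact hl₀ H hH
        · intro x hx
          rcases List.mem_cons.mp hx with rfl | hx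
          · refine ⟨((ULift.up (Multiplicative.ofAdd (1 : ZMod n)), 1) : Cg × PdG l₀), ?_⟩
            show hg (ULift.up (Multiplicative.ofAdd (1 : ZMod n))) * q₀ 1 = x
            rw [hgen1, map_one, mul_one]
          · obtain ⟨p, hp⟩ := hq₀ x hx
            refine ⟨((1, p) : Cg × PdG l₀), ?_⟩
            show hg 1 * q₀ p = x
            rw [map_one, one_mul]
            exact hp
  obtain ⟨l, hl, q, hq⟩ := main (Finset.univ.toList)
  refine ⟨l, hl, q, fun x => ?_⟩
  obtain ⟨p, hp⟩ := hq x (by simp [Finset.mem_toList])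
  exact ⟨p, hp⟩

theorem nest_cover (m : List GrpCat.{u})
    (hm : ∀ Z ∈ m, Finite Z ∧ ∀ x y : Z, x * y = y * x)
    (W : GrpCat.{u}) [Finite W] :
    ∃ σ : nestW m W →* Wr (PdG m) W, Surjective σ := by
  classical
  induction m with
  | nil =>
      haveI : Subsingleton (PdG ([] : List GrpCat.{u})) :=
        inferInstanceAs (Subsingleton PUnit.{u + 1})
      refine ⟨SemidirectProduct.inr, fun x => ⟨x.right, ?_⟩⟩
      exact SemidirectProduct.ext (Subsingleton.elim _ _) rfl
  | cons Z t ih =>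
      obtain ⟨σ₀, hσ₀⟩ := ih fun K hK => hm K (List.mem_cons_of_mem Z hK)
      haveI : Finite (nestW t W) :=
        finite_nestW t W fun K hK => (hm K (List.mem_cons_of_mem Z hK)).1
      haveI : Finite (PdG t) := finite_PdG t fun K hK => (hm K (List.mem_cons_of_mem Z hK)).1
      letI : Fintype (nestW t W) := Fintype.ofFinite _
      letI : Fintype (Wr (PdG t) W) := Fintype.ofFinite _
      letI : CommGroup Z :=
        { (inferInstance : Group Z) with mul_comm := (hm Z (List.mem_cons_self (a := Z) (l := t))).2 }
      refine ⟨(wrPair Z (PdG t) W).comp (wrBase σ₀), ?_⟩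
      exact (wrPair_surj Z (PdG t) W).comp (wrBase_surj σ₀ hσ₀)

theorem sdp_cover (A : Type u) [CommGroup A] [Finite A] {G : GrpCat.{u}} (φ : G →* MulAut A)
    (C : GrpCat.{u}) (l : List GrpCat.{u}) (hcl : ∀ H ∈ C :: l, Finite H ∧ IsCyclic H)
    (π : descW C l →* G) (hπ : Surjective π) :
    ∃ (C' : GrpCat.{u}) (l' : List GrpCat.{u}),
      (∀ H ∈ C' :: l', Finite H ∧ IsCyclic H) ∧
      ∃ ψ : descW C' l' →* A ⋊[φ] G, Surjective ψ := by
  classical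
  haveI : Finite (descW C l) := finite_descW C l fun H hH => (hcl H hH).1
  letI : Fintype (descW C l) := Fintype.ofFinite _
  obtain ⟨lA, hlA, q, hq⟩ := abelian_cover A fun x y => mul_comm x y
  obtain ⟨σ, hσ⟩ := nest_cover lA (fun Z hZ => ⟨(hlA Z hZ).1, (hlA Z hZ).2.2⟩) (descW C l)
  obtain ⟨C', l', h1, h2⟩ := nest_descW lA C l
  refine ⟨C', l', ?_, ?_⟩
  · intro H hH
    have hmem : H ∈ lA ++ C :: l := by rw [← h1]; exact hH
    rcases List.mem_append.mp hmem with h | h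
    · exact ⟨(hlA H h).1, (hlA H h).2.1⟩
    · exact hcl H h
  · rw [h2]
    exact ⟨(wrToSdp φ π).comp ((wrPost (descW C l) q).comp σ),
      (wrToSdp_surj φ π hπ).comp ((wrPost_surj _ q hq).comp hσ)⟩

end Stmt13Aux

/-- Every finite semiabelian group is a surjective homomorphic
image of a descending iterated standard wreath product of finite cyclic groups. -/
theorem stmt13 (G : GrpCat.{u}) (hfin : Finite G) (hG : IsSemiabelian G) :
    ∃ (C : GrpCat.{u}) (l : List GrpCat.{u}),
      (∀ H ∈ C :: l, Finite H ∧ IsCyclic H) ∧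
      ∃ π : descW C l →* G, Function.Surjective π := by
  clear hfin
  induction hG with
  | of_abelian G hfG hcomm =>
      haveI := hfG
      classical
      obtain ⟨lA, hlA, q, hq⟩ := Stmt13Aux.abelian_cover G hcomm
      let T0 : GrpCat.{u} := GrpCat.of PUnit.{u + 1}
      haveI : Finite T0 := inferInstanceAs (Finite PUnit.{u + 1})
      haveI : Subsingleton T0 := inferInstanceAs (Subsingleton PUnit.{u + 1})
      obtain ⟨σ, hσ⟩ :=
        Stmt13Aux.nest_cover lA (fun Z hZ => ⟨(hlA Z hZ).1, (hlA Z hZ).2.2⟩) T0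
      let ev : Wr (Stmt13Aux.PdG lA) T0 →* Stmt13Aux.PdG lA :=
        { toFun := fun x => x.left 1
          map_one' := rfl
          map_mul' := fun x y => by
            show x.left 1 * y.left (1 * x.right) = x.left 1 * y.left 1
            rw [Subsingleton.elim ((1 : T0) * x.right) 1] }
      have hev : Function.Surjective ev := fun a => ⟨⟨fun _ => a, 1⟩, rfl⟩
      obtain ⟨C', l', h1, h2⟩ := Stmt13Aux.nest_descW lA T0 []
      refine ⟨C', l', ?_, ?_⟩
      · intro H hH
        have hmem : H ∈ lA ++ [T0] := by rw [← h1]; exact hH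
        rcases List.mem_append.mp hmem with h | h
        · exact ⟨(hlA H h).1, (hlA H h).2.1⟩
        · have : H = T0 := by simpa using h
          subst this
          exact ⟨inferInstanceAs (Finite PUnit.{u + 1}),
            inferInstanceAs (IsCyclic PUnit.{u + 1})⟩
      · rw [h2]
        exact ⟨q.comp (ev.comp σ), hq.comp (hev.comp hσ)⟩
  | of_quotient G H f hf hG ih =>
      obtain ⟨C, l, hcl, π, hπ⟩ := ih
      exact ⟨C, l, hcl, f.comp π, hf.comp hπ⟩
  | of_semidirect G A hA φ hG ih =>
      obtain ⟨C, l, hcl, π, hπ⟩ := ih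
      haveI := hA
      obtain ⟨C', l', h1, ψ, hψ⟩ := Stmt13Aux.sdp_cover A φ C l hcl π hπ
      exact ⟨C', l', h1, ψ, hψ⟩
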